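/- Schur complement ellipsoid inclusion: let P ∈ ℝ^{n×n} be symmetric positive definite, K ∈ ℝ^{m×n}, ℓ ∈ (ℝ_{>0})^m, and μ > 0. If the block matrix [[P, Kᵀ], [K, μ·diag(ℓ)²]] is positive semidefinite, then every X ∈ ℝ^n with Xᵀ P X ≤ 1/μ satisfies |(KX)_k| ≤ ℓ_k for each 1 ≤ k ≤ m. -/

import Mathlib

open Matrix

theorem schur_ellipsoid {n m : ℕ} (P : Matrix (Fin n) (Fin n) ℝ) (hP : P.PosDef)
    (K : Matrix (Fin m) (Fin n) ℝ) (ℓ : Fin m → ℝ) (hℓ : ∀ k, 0 < ℓ k)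
    (μ : ℝ) (hμ : 0 < μ)
    (hblock : (Matrix.fromBlocks P Kᵀ K (μ • (Matrix.diagonal ℓ) ^ 2)).PosSemidef) :
    ∀ X : Fin n → ℝ, X ⬝ᵥ P.mulVec X ≤ 1 / μ → ∀ k, |K.mulVec X k| ≤ ℓ k := by
  intro X hX k
  set a := K.mulVec X k with ha
  set L := ℓ k with hLdef
  have hL : 0 < L := hℓ k
  set s : ℝ := -a / (μ * L ^ 2) with hs
  set y : Fin m → ℝ := Pi.single k s with hy
  have h := hblock.dotProduct_mulVec_nonneg (Sum.elim X y)
  rw [Matrix.fromBlocks_mulVec] at h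
  simp only [star_trivial, Sum.elim_comp_inl, Sum.elim_comp_inr,
    sumElim_dotProduct_sumElim, dotProduct_add] at h
  have e1 : X ⬝ᵥ Kᵀ.mulVec y = a * s := by
    rw [Matrix.dotProduct_mulVec, Matrix.vecMul_transpose, hy,
      dotProduct_single, ha]
  have e2 : y ⬝ᵥ K.mulVec X = s * a := by
    rw [hy, single_dotProduct, ha, mul_comm]
  have e3 : y ⬝ᵥ (μ • (Matrix.diagonal ℓ) ^ 2).mulVec y = μ * s ^ 2 * L ^ 2 := by
    rw [Matrix.diagonal_pow, Matrix.smul_mulVec, hy, single_dotProduct]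
    simp [Matrix.mulVec_diagonal, Pi.single_apply, hLdef]
    ring
  rw [e1, e2, e3] at h
  have hden : (0:ℝ) < μ * L ^ 2 := by positivity
  have hq : 0 ≤ X ⬝ᵥ P.mulVec X - a ^ 2 / (μ * L ^ 2) := by
    have hc : s * (μ * L ^ 2) = -a := by
      rw [hs]; field_simp
    have hd : a ^ 2 / (μ * L ^ 2) * (μ * L ^ 2) = a ^ 2 := by
      field_simp
    nlinarith [h, hden]
  have key : a ^ 2 ≤ L ^ 2 := by
    have h3 : a ^ 2 / (μ * L ^ 2) ≤ 1 / μ := le_trans (by linarith) hX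
    rw [div_le_div_iff₀ hden hμ] at h3
    nlinarith [h3, hμ, pow_pos hL 2]
  nlinarith [abs_nonneg a, sq_abs a, key, hL]
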